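/- (Lower bound.) For every a ∈ I and every n ≥ 1, (1/2)·v_{N(n)}(1) ≤ sup_{x ∈ I, y ∈ I} | G_{N,a}({x' ∈ I : T_N^n(x') ∈ [0,x] and s_{n,a}(x') ∈ [0,y]}) − (1/log((N+1)/N))·log((xy+N)/N) |, where v_{N(n)}(1) = (1+N)·N^{n+1}/(q̃_{n+1}·q̃_{n+2}) and the sequence q̃ is defined by q̃_{−1}=0, q̃_0=1 and q̃_k = N(q̃_{k−1}+q̃_{k−2}) for k ≥ 1. -/

import Mathlib

open MeasureTheory Set Filter
open scoped Classical Topology ENNReal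

/-- The N-continued fraction transformation `T_N x = N/x - ⌊N/x⌋` (with `T_N 0 = 0`). -/
noncomputable def TN (N : ℕ) (x : ℝ) : ℝ := (N : ℝ) / x - ⌊(N : ℝ) / x⌋

/-- `digit N x k` is the (k+1)-st N-continued fraction digit `a_{k+1}(x) = ⌊N / T_N^k(x)⌋`. -/
noncomputable def digit (N : ℕ) (x : ℝ) (k : ℕ) : ℕ := ⌊(N : ℝ) / (TN N)^[k] x⌋₊

/-- The conditional measure `G_{N,a}` with distribution function `(N+a)x/(ax+N)` on `[0,1]`,
i.e. with density `N(N+a)/(ax+N)²` with respect to Lebesgue measure on `[0,1]`. -/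
noncomputable def GNa (N : ℕ) (a : ℝ) : Measure ℝ :=
  (volume.restrict (Icc (0:ℝ) 1)).withDensity
    (fun x => ENNReal.ofReal ((N : ℝ) * (N + a) / (a * x + N) ^ 2))

/-- `sSeq N a x n = s_{n,a}(x)`: `s_{0,a} = a`, `s_{n,a} = N/(s_{n-1,a} + a_n(x))`. -/
noncomputable def sSeq (N : ℕ) (a x : ℝ) : ℕ → ℝ
  | 0 => a
  | (n+1) => (N : ℝ) / (sSeq N a x n + (digit N x n : ℝ))

/-- The sequence `q̃`, shifted: `qt N (k+1) = q̃_k` where `q̃_{-1}=0`, `q̃_0=1`,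
`q̃_k = N(q̃_{k-1}+q̃_{k-2})`. -/
noncomputable def qt (N : ℕ) : ℕ → ℝ
  | 0 => 0
  | 1 => 1
  | (k+2) => (N : ℝ) * (qt N (k+1) + qt N k)

/-! ### Auxiliary material for the proof -/

/-- The Möbius map `t ↦ N/(N+t)` which implements both the inverse branch of `T_N`
with digit `N` and the recursion for `s_{n,a}` along digit `N`. -/
noncomputable def phiCF (N : ℕ) (t : ℝ) : ℝ := (N : ℝ) / (N + t)

namespace LowerBoundAux

lemma qt_rec (N : ℕ) (k : ℕ) : qt N (k+2) = (N : ℝ) * (qt N (k+1) + qt N k) := rfl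

lemma qt_aux (N : ℕ) (hN : 1 ≤ N) : ∀ k, 0 ≤ qt N k ∧ 0 < qt N (k+1) := by
  intro k
  induction k with
  | zero => simp [qt]
  | succ k ih =>
    refine ⟨le_of_lt ih.2, ?_⟩
    rw [qt_rec]
    have hN' : (1:ℝ) ≤ (N:ℝ) := by exact_mod_cast hN
    nlinarith [ih.1, ih.2]

lemma qt_pos (N : ℕ) (hN : 1 ≤ N) (k : ℕ) : 0 < qt N (k+1) := (qt_aux N hN k).2
lemma qt_nonneg (N : ℕ) (hN : 1 ≤ N) (k : ℕ) : 0 ≤ qt N k := (qt_aux N hN k).1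

lemma qt_det (N : ℕ) : ∀ n, (qt N (n+1))^2 - qt N n * qt N (n+2) = (-(N:ℝ))^n := by
  intro n
  induction n with
  | zero => simp [qt]
  | succ n ih =>
    rw [qt_rec N (n+1), qt_rec N n] at *
    ring_nf at *
    nlinarith [ih]

section
variable {N : ℕ}

lemma hNR (hN : 1 ≤ N) : (1:ℝ) ≤ (N:ℝ) := by exact_mod_cast hN

lemma phi_nonneg_mem (hN : 1 ≤ N) {t : ℝ} (ht : 0 ≤ t) : phiCF N t ∈ Icc (0:ℝ) 1 := by
  have h1 : (1:ℝ) ≤ (N:ℝ) := hNR hN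
  constructor
  · rw [phiCF]; positivity
  · rw [phiCF, div_le_one (by linarith)]; linarith

lemma phi_mem_Ioo (hN : 1 ≤ N) {t : ℝ} (ht : t ∈ Ioo (0:ℝ) 1) : phiCF N t ∈ Ioo (0:ℝ) 1 := by
  have h1 : (1:ℝ) ≤ (N:ℝ) := hNR hN
  obtain ⟨ht0, ht1⟩ := ht
  constructor
  · rw [phiCF]; positivity
  · rw [phiCF, div_lt_one (by linarith)]; linarith

lemma phi_iter_mem_Ioo (hN : 1 ≤ N) {t : ℝ} (ht : t ∈ Ioo (0:ℝ) 1) (n : ℕ) :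
    (phiCF N)^[n] t ∈ Ioo (0:ℝ) 1 := by
  induction n with
  | zero => simpa using ht
  | succ n ih => rw [Function.iterate_succ_apply']; exact phi_mem_Ioo hN ih

lemma phi_iter_mem_Icc (hN : 1 ≤ N) {t : ℝ} (ht : t ∈ Icc (0:ℝ) 1) (n : ℕ) :
    (phiCF N)^[n] t ∈ Icc (0:ℝ) 1 := by
  induction n with
  | zero => simpa using ht
  | succ n ih => rw [Function.iterate_succ_apply']; exact phi_nonneg_mem hN ih.1

lemma phi_iter_formula (hN : 1 ≤ N) : ∀ (m : ℕ) (t : ℝ), 0 ≤ t →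
    (phiCF N)^[m+1] t =
      ((N:ℝ) * qt N m * t + N * qt N (m+1)) / (qt N (m+1) * t + qt N (m+2)) := by
  intro m
  induction m with
  | zero =>
    intro t ht
    have h1 : (1:ℝ) ≤ (N:ℝ) := hNR hN
    have hd : (0:ℝ) < qt N 1 * t + qt N 2 := by
      simp only [qt]; nlinarith
    rw [Function.iterate_one, phiCF]
    rw [div_eq_div_iff (by linarith) hd.ne']
    simp only [qt]; ring
  | succ m ih =>
    intro t ht
    have h1 : (1:ℝ) ≤ (N:ℝ) := hNR hN
    have hphit : 0 ≤ phiCF N t := (phi_nonneg_mem hN ht).1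
    rw [Function.iterate_succ_apply, ih (phiCF N t) hphit]
    have hNt : (0:ℝ) < N + t := by linarith
    have hd1 : 0 < qt N (m+1) * phiCF N t + qt N (m+2) := by
      have h2 := qt_pos N hN (m+1)
      have h3 := qt_nonneg N hN (m+1)
      nlinarith
    have hd2 : 0 < qt N (m+1+1) * t + qt N (m+1+2) := by
      have h2 := qt_pos N hN (m+2)
      have h3 := qt_nonneg N hN (m+2)
      nlinarith
    rw [div_eq_div_iff hd1.ne' hd2.ne']
    rw [phiCF, qt_rec N (m+1), qt_rec N m]
    field_simp
    ring

lemma Ndiv_phi (hN : 1 ≤ N) (t : ℝ) : (N:ℝ) / phiCF N t = N + t := by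
  have h1 : (1:ℝ) ≤ (N:ℝ) := hNR hN
  rw [phiCF]
  rw [div_div_eq_mul_div]
  field_simp

lemma TN_phi (hN : 1 ≤ N) {t : ℝ} (ht : t ∈ Ico (0:ℝ) 1) : TN N (phiCF N t) = t := by
  rw [TN, Ndiv_phi hN]
  have : ⌊(N:ℝ) + t⌋ = N := by
    rw [add_comm, Int.floor_add_natCast, Int.floor_eq_zero_iff.2 (by exact ⟨ht.1, ht.2⟩)]
    simp
  rw [this]
  push_cast; ring

lemma TN_iter_phi (hN : 1 ≤ N) : ∀ (n k : ℕ), k ≤ n → ∀ {t : ℝ}, t ∈ Ioo (0:ℝ) 1 →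
    (TN N)^[k] ((phiCF N)^[n] t) = (phiCF N)^[n-k] t := by
  intro n k
  induction k with
  | zero => intro _ t ht; simp
  | succ k ih =>
    intro hk t ht
    have hk' : k ≤ n := Nat.le_of_succ_le hk
    rw [Function.iterate_succ_apply', ih hk' ht]
    obtain ⟨j, hj⟩ : ∃ j, n - k = j + 1 := ⟨n - k - 1, by omega⟩
    have hnk1 : n - (k+1) = j := by omega
    rw [hj, hnk1, Function.iterate_succ_apply']
    exact TN_phi hN (Ioo_subset_Ico_self (phi_iter_mem_Ioo hN ht j))

lemma digit_iter_phi (hN : 1 ≤ N) {n k : ℕ} (hk : k < n) {t : ℝ} (ht : t ∈ Ioo (0:ℝ) 1) :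
    digit N ((phiCF N)^[n] t) k = N := by
  rw [digit, TN_iter_phi hN n k hk.le ht]
  obtain ⟨j, hj⟩ : ∃ j, n - k = j + 1 := ⟨n - k - 1, by omega⟩
  rw [hj, Function.iterate_succ_apply']
  have hmem := phi_iter_mem_Ioo hN ht j
  rw [Ndiv_phi hN, add_comm, Nat.floor_add_natCast hmem.1.le,
    Nat.floor_eq_zero.2 hmem.2, zero_add]

lemma sSeq_eq_phi_iter {x : ℝ} (n : ℕ) (hd : ∀ k < n, digit N x k = N) (a : ℝ) :
    sSeq N a x n = (phiCF N)^[n] a := by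
  induction n with
  | zero => simp [sSeq]
  | succ n ih =>
    rw [Function.iterate_succ_apply']
    show (N : ℝ) / (sSeq N a x n + (digit N x n : ℝ)) = _
    rw [ih (fun k hk => hd k (Nat.lt_succ_of_lt hk)), hd n (Nat.lt_succ_self n), phiCF, add_comm]

lemma phi_iter_continuousOn (hN : 1 ≤ N) (n : ℕ) :
    ContinuousOn ((phiCF N)^[n]) (Icc (0:ℝ) 1) := by
  have h1 : (1:ℝ) ≤ (N:ℝ) := hNR hN
  induction n with
  | zero => simpa using continuousOn_id
  | succ n ih =>
    have hphi : ContinuousOn (phiCF N) (Icc (0:ℝ) 1) := by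
      apply ContinuousOn.div continuousOn_const (by fun_prop)
      intro x hx h
      have := hx.1
      linarith
    have : ∀ x ∈ Icc (0:ℝ) 1, (phiCF N)^[n+1] x = ((phiCF N)^[n] ∘ phiCF N) x := by
      intro x hx; rw [Function.iterate_succ_apply]; rfl
    refine ContinuousOn.congr ?_ this
    exact ih.comp hphi (fun x hx => phi_nonneg_mem hN hx.1)

lemma phi_iter_image (hN : 1 ≤ N) (n : ℕ) :
    Ioo (min ((phiCF N)^[n] 0) ((phiCF N)^[n] 1)) (max ((phiCF N)^[n] 0) ((phiCF N)^[n] 1)) ⊆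
      (phiCF N)^[n] '' (Ioo (0:ℝ) 1) := by
  rcases le_total ((phiCF N)^[n] 0) ((phiCF N)^[n] 1) with h | h
  · rw [min_eq_left h, max_eq_right h]
    exact intermediate_value_Ioo (by norm_num) (phi_iter_continuousOn hN n)
  · rw [min_eq_right h, max_eq_left h]
    exact intermediate_value_Ioo' (by norm_num) (phi_iter_continuousOn hN n)

lemma GNa_Ioo (hN : 1 ≤ N) {a : ℝ} (ha : a ∈ Icc (0:ℝ) 1) {u v : ℝ}
    (hu : 0 ≤ u) (huv : u ≤ v) (hv : v ≤ 1) :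
    GNa N a (Ioo u v) =
      ENNReal.ofReal ((N + a) * v / (a * v + N) - (N + a) * u / (a * u + N)) := by
  have h1 : (1:ℝ) ≤ (N:ℝ) := by exact_mod_cast hN
  have ha0 := ha.1
  set g : ℝ → ℝ := fun x => (N : ℝ) * (N + a) / (a * x + N) ^ 2 with hg
  have hden : ∀ x : ℝ, 0 ≤ x → a * x + N ≠ 0 := by
    intro x hx
    have : 0 ≤ a * x := mul_nonneg ha0 hx
    positivity
  have hcont : ContinuousOn g (Icc u v) := by
    apply ContinuousOn.div continuousOn_const (by fun_prop)
    intro x hx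
    have hx0 : 0 ≤ x := le_trans hu hx.1
    have := hden x hx0
    positivity
  have step1 : GNa N a (Ioo u v) = ∫⁻ x in Ioo u v, ENNReal.ofReal (g x) := by
    rw [GNa, withDensity_apply _ measurableSet_Ioo, Measure.restrict_restrict measurableSet_Ioo,
      inter_eq_self_of_subset_left (Ioo_subset_Icc_self.trans (Icc_subset_Icc hu hv))]
  have hInt : IntegrableOn g (Ioo u v) volume :=
    (hcont.integrableOn_Icc).mono_set Ioo_subset_Icc_self
  have step2 : ∫⁻ x in Ioo u v, ENNReal.ofReal (g x) = ENNReal.ofReal (∫ x in Ioo u v, g x) := by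
    rw [← ofReal_integral_eq_lintegral_ofReal hInt]
    filter_upwards [ae_restrict_mem measurableSet_Ioo] with x hx
    have hx0 : 0 ≤ x := le_trans hu hx.1.le
    have := hden x hx0
    positivity
  have step3 : ∫ x in Ioo u v, g x = ∫ x in u..v, g x := by
    rw [intervalIntegral.integral_of_le huv, ← MeasureTheory.integral_Ioc_eq_integral_Ioo]
  have step4 : ∫ x in u..v, g x = (N + a) * v / (a * v + N) - (N + a) * u / (a * u + N) := by
    have hderiv : ∀ x ∈ Set.uIcc u v, HasDerivAt (fun y => (N + a) * y / (a * y + N)) (g x) x := by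
      intro x hx
      rw [Set.uIcc_of_le huv] at hx
      have hx0 : 0 ≤ x := le_trans hu hx.1
      have hne := hden x hx0
      have h1' : HasDerivAt (fun y : ℝ => (N + a) * y) (N + a) x := by
        simpa using (hasDerivAt_id x).const_mul ((N:ℝ) + a)
      have h2' : HasDerivAt (fun y : ℝ => a * y + N) a x := by
        simpa using ((hasDerivAt_id x).const_mul a).add_const (N:ℝ)
      have := h1'.div h2' hne
      convert this using 1
      show g x = _
      rw [hg]
      field_simp
      ring
      all_goals rfl
    have hii : IntervalIntegrable g volume u v := by
      rw [intervalIntegrable_iff_integrableOn_Icc_of_le huv]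
      exact hcont.integrableOn_Icc
    exact intervalIntegral.integral_eq_sub_of_hasDerivAt hderiv hii
  rw [step1, step2, step3, step4]

lemma GNa_univ_ne_top (hN : 1 ≤ N) {a : ℝ} (ha : a ∈ Icc (0:ℝ) 1) :
    GNa N a Set.univ ≠ ⊤ := by
  have h1 : (1:ℝ) ≤ (N:ℝ) := by exact_mod_cast hN
  have hbound : GNa N a Set.univ ≤ ENNReal.ofReal ((N + a) / N) * volume (Icc (0:ℝ) 1) := by
    rw [GNa, withDensity_apply _ MeasurableSet.univ, Measure.restrict_univ]
    calc ∫⁻ x, ENNReal.ofReal ((N : ℝ) * (N + a) / (a * x + N) ^ 2)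
            ∂(volume.restrict (Icc (0:ℝ) 1))
        ≤ ∫⁻ _, ENNReal.ofReal ((N + a) / N) ∂(volume.restrict (Icc (0:ℝ) 1)) := by
          apply lintegral_mono_ae
          filter_upwards [ae_restrict_mem measurableSet_Icc] with x hx
          apply ENNReal.ofReal_le_ofReal
          rw [div_le_div_iff₀ (by nlinarith [mul_nonneg ha.1 hx.1]) (by linarith)]
          have hax : 0 ≤ a * x := mul_nonneg ha.1 hx.1
          have hNa : (0:ℝ) ≤ (N:ℝ) + a := by linarith [ha.1]
          have key : 0 ≤ ((N:ℝ) + a) * ((a*x) * (a*x + 2*N)) :=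
            mul_nonneg hNa (mul_nonneg hax (by linarith))
          nlinarith [key]
      _ = ENNReal.ofReal ((N + a) / N) * volume (Icc (0:ℝ) 1) := by
          rw [lintegral_const, Measure.restrict_apply_univ]
  refine ne_top_of_le_ne_top ?_ hbound
  simp [Real.volume_Icc]

lemma GNa_ne_top (hN : 1 ≤ N) {a : ℝ} (ha : a ∈ Icc (0:ℝ) 1) (S : Set ℝ) :
    GNa N a S ≠ ⊤ :=
  ne_top_of_le_ne_top (GNa_univ_ne_top hN ha) (measure_mono (subset_univ _))


lemma main_ineq (Nr a A B C D : ℝ) (hN : 1 ≤ Nr) (ha0 : 0 ≤ a) (ha1 : a ≤ 1)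
    (hA : 0 ≤ A) (hB : 0 < B) (hC : C = Nr * (B + A)) (hD : D = Nr * (C + B)) :
    (1 + Nr) * Nr * ((a * A + B) * (a * B + C)) ≤ (Nr + a) * (C * D) := by
  have hCpos : 0 < C := by rw [hC]; nlinarith
  have hid : (Nr + a) * (C * D) - (1 + Nr) * Nr * ((a * A + B) * (a * B + C)) =
      (1 - a) * (Nr * C * (Nr * C - B)) + a * ((Nr + 1) * (Nr - 1) * C * (C + B))
        + (1 + Nr) * Nr * A * B * (a * (1 - a)) := by
    subst hC hD; ring
  have hh1 : 0 ≤ Nr * C * (Nr * C - B) := by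
    apply mul_nonneg (by positivity)
    nlinarith
  have hh2 : 0 ≤ (Nr + 1) * (Nr - 1) * C * (C + B) := by
    apply mul_nonneg (mul_nonneg (by nlinarith) hCpos.le); linarith
  have hh3 : 0 ≤ (1 + Nr) * Nr * A * B * (a * (1 - a)) := by
    apply mul_nonneg (by positivity)
    exact mul_nonneg ha0 (by linarith)
  nlinarith [mul_nonneg (sub_nonneg.2 ha1) hh1, mul_nonneg ha0 hh2]

end

end LowerBoundAux

/-- The function whose supremum is bounded below. -/
noncomputable def Ffun (N : ℕ) (a : ℝ) (n : ℕ) : Icc (0:ℝ) 1 × Icc (0:ℝ) 1 → ℝ := fun p =>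
  |(GNa N a {x' ∈ Icc (0:ℝ) 1 |
        (TN N)^[n] x' ∈ Icc (0:ℝ) p.1 ∧ sSeq N a x' n ∈ Icc (0:ℝ) p.2}).toReal
    - (Real.log ((N+1)/N))⁻¹ * Real.log (((p.1 : ℝ) * (p.2 : ℝ) + N) / N)|

set_option maxHeartbeats 1000000 in
open LowerBoundAux in
/-- Lower bound: for every `a ∈ I` and `n ≥ 1`,
`(1/2) v_{N(n)}(1) ≤ sup_{x,y ∈ I} |G_{N,a}(T_N^n ∈ [0,x], s_{n,a} ∈ [0,y])
  − (1/log((N+1)/N)) log((xy+N)/N)|`, where `v_{N(n)}(1) = (1+N) N^{n+1}/(q̃_{n+1} q̃_{n+2})`. -/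
theorem lower_bound_two_dim (N : ℕ) (hN : 1 ≤ N) (a : ℝ) (ha : a ∈ Icc (0:ℝ) 1)
    (n : ℕ) (hn : 1 ≤ n) :
    (1/2) * ((1 + N) * (N : ℝ) ^ (n+1) / (qt N (n+2) * qt N (n+3))) ≤
      ⨆ p : Icc (0:ℝ) 1 × Icc (0:ℝ) 1,
        |(GNa N a {x' ∈ Icc (0:ℝ) 1 |
              (TN N)^[n] x' ∈ Icc (0:ℝ) p.1 ∧ sSeq N a x' n ∈ Icc (0:ℝ) p.2}).toReal
          - (Real.log ((N+1)/N))⁻¹ * Real.log (((p.1 : ℝ) * (p.2 : ℝ) + N) / N)| := by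
  classical
  have h1 : (1:ℝ) ≤ (N:ℝ) := by exact_mod_cast hN
  have hN0 : (0:ℝ) < N := by linarith
  have ha0 := ha.1
  have ha1 := ha.2
  obtain ⟨m, rfl⟩ : ∃ m, n = m + 1 := ⟨n - 1, by omega⟩
  rw [show m+1+2 = m+3 from rfl, show m+1+3 = m+4 from rfl, show m+1+1 = m+2 from rfl]
  show (1/2) * ((1 + N) * (N : ℝ) ^ (m+2) / (qt N (m+3) * qt N (m+4))) ≤
      ⨆ p : Icc (0:ℝ) 1 × Icc (0:ℝ) 1, Ffun N a (m+1) p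
  -- qt facts
  have hqA : 0 < qt N (m+1) := qt_pos N hN m
  have hqB : 0 < qt N (m+2) := qt_pos N hN (m+1)
  have hqC : 0 < qt N (m+3) := qt_pos N hN (m+2)
  have hqD : 0 < qt N (m+4) := qt_pos N hN (m+3)
  have hq0 : 0 ≤ qt N m := qt_nonneg N hN m
  have hrC : qt N (m+3) = (N:ℝ) * (qt N (m+2) + qt N (m+1)) := qt_rec N (m+1)
  have hrD : qt N (m+4) = (N:ℝ) * (qt N (m+3) + qt N (m+2)) := qt_rec N (m+2)
  -- endpoints of the fundamental cylinder of rank m+1 with all digits N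
  obtain ⟨α, hα_def⟩ : ∃ x : ℝ, x = (N:ℝ) * qt N (m+1) / qt N (m+2) := ⟨_, rfl⟩
  obtain ⟨β, hβ_def⟩ : ∃ x : ℝ, x = (N:ℝ) * qt N (m+2) / qt N (m+3) := ⟨_, rfl⟩
  have hiter0 : (phiCF N)^[m+1] 0 = α := by
    rw [phi_iter_formula hN m 0 le_rfl, hα_def]
    rw [mul_zero, zero_add, mul_zero, zero_add]
  have hiter1 : (phiCF N)^[m+1] 1 = β := by
    rw [phi_iter_formula hN m 1 zero_le_one, hβ_def]
    have hrB : qt N (m+2) = (N:ℝ) * (qt N (m+1) + qt N m) := qt_rec N m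
    have hd : (0:ℝ) < qt N (m+1) * 1 + qt N (m+2) := by nlinarith
    rw [div_eq_div_iff hd.ne' hqC.ne', hrC, hrB]
    ring
  have hαmem : α ∈ Icc (0:ℝ) 1 := by
    rw [← hiter0]; exact phi_iter_mem_Icc hN ⟨le_rfl, zero_le_one⟩ (m+1)
  have hβmem : β ∈ Icc (0:ℝ) 1 := by
    rw [← hiter1]; exact phi_iter_mem_Icc hN ⟨zero_le_one, le_rfl⟩ (m+1)
  have hmn0 : 0 ≤ min α β := le_min hαmem.1 hβmem.1
  have hmx1 : max α β ≤ 1 := max_le hαmem.2 hβmem.2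
  -- the common value of s_{n,a} on the cylinder
  obtain ⟨y₀, hy₀_def⟩ : ∃ y : ℝ, y = (phiCF N)^[m+1] a := ⟨_, rfl⟩
  have hy01 : y₀ ∈ Icc (0:ℝ) 1 := by
    rw [hy₀_def]; exact phi_iter_mem_Icc hN ha (m+1)
  have hy0pos : 0 < y₀ := by
    rw [hy₀_def, Function.iterate_succ_apply']
    have hmem := phi_iter_mem_Icc hN ha m
    have hden : (0:ℝ) < N + (phiCF N)^[m] a := by linarith [hmem.1]
    rw [phiCF]
    positivity
  -- the sets appearing in the supremum, for x-parameter equal to 1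
  obtain ⟨A, hA_def⟩ : ∃ A' : ℝ → Set ℝ, A' = fun y => {x' ∈ Icc (0:ℝ) 1 |
      (TN N)^[m+1] x' ∈ Icc (0:ℝ) 1 ∧ sSeq N a x' (m+1) ∈ Icc (0:ℝ) y} := ⟨_, rfl⟩
  have hmemA : ∀ y x, x ∈ A y ↔ (x ∈ Icc (0:ℝ) 1 ∧
      (TN N)^[m+1] x ∈ Icc (0:ℝ) 1 ∧ sSeq N a x (m+1) ∈ Icc (0:ℝ) y) := by
    intro y x
    rw [hA_def]
    simp only [Set.mem_setOf_eq]
  have hsval : ∀ x ∈ (phiCF N)^[m+1] '' (Ioo (0:ℝ) 1),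
      x ∈ Icc (0:ℝ) 1 ∧ (TN N)^[m+1] x ∈ Icc (0:ℝ) 1 ∧ sSeq N a x (m+1) = y₀ := by
    rintro x ⟨t, ht, rfl⟩
    refine ⟨Ioo_subset_Icc_self (phi_iter_mem_Ioo hN ht (m+1)), ?_, ?_⟩
    · have h := TN_iter_phi hN (m+1) (m+1) le_rfl ht
      rw [Nat.sub_self, Function.iterate_zero_apply] at h
      rw [h]
      exact Ioo_subset_Icc_self ht
    · rw [hy₀_def]
      exact sSeq_eq_phi_iter (m+1) (fun k hk => digit_iter_phi hN hk ht) a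
  have hJsub : Ioo (min α β) (max α β) ⊆ (phiCF N)^[m+1] '' (Ioo (0:ℝ) 1) := by
    have h := phi_iter_image hN (m+1)
    rwa [hiter0, hiter1] at h
  -- the measure of the cylinder interval
  have hd1 : (0:ℝ) < a * max α β + N := by
    have hh := mul_nonneg ha0 (hmn0.trans (min_le_max (a := α) (b := β)))
    linarith only [hh, h1]
  have hd2 : (0:ℝ) < a * min α β + N := by
    have hh := mul_nonneg ha0 hmn0
    linarith only [hh, h1]
  have hμJ := GNa_Ioo hN ha hmn0 (min_le_max (a := α) (b := β)) hmx1
  have hval : ((N:ℝ) + a) * max α β / (a * max α β + N) - (N + a) * min α β / (a * min α β + N)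
      = (N:ℝ) * (N + a) * (max α β - min α β) / ((a * max α β + N) * (a * min α β + N)) := by
    field_simp
    ring
  have hJval : (GNa N a (Ioo (min α β) (max α β))).toReal
      = (N:ℝ) * (N + a) * (max α β - min α β) / ((a * max α β + N) * (a * min α β + N)) := by
    rw [hμJ, hval, ENNReal.toReal_ofReal]
    apply div_nonneg
    · apply mul_nonneg (by positivity)
      exact sub_nonneg.2 min_le_max
    · positivity
  -- the length of the interval
  have hβα : β - α = (N:ℝ) * (-(N:ℝ))^(m+1) / (qt N (m+2) * qt N (m+3)) := by
    have hdet : (qt N (m+2))^2 - qt N (m+1) * qt N (m+3) = (-(N:ℝ))^(m+1) := qt_det N (m+1)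
    rw [hα_def, hβ_def, div_sub_div _ _ hqC.ne' hqB.ne',
      div_eq_div_iff (mul_pos hqC hqB).ne' (mul_pos hqB hqC).ne']
    linear_combination ((N:ℝ) * qt N (m+2) * qt N (m+3)) * hdet
  have habs : |β - α| = (N:ℝ)^(m+2) / (qt N (m+2) * qt N (m+3)) := by
    rw [hβα, abs_div, abs_mul, abs_pow, abs_neg, abs_of_nonneg hN0.le,
      abs_of_pos (mul_pos hqB hqC),
      show (N:ℝ) * (N:ℝ)^(m+1) = (N:ℝ)^(m+2) from by ring]
  have hdiffval : max α β - min α β = (N:ℝ)^(m+2) / (qt N (m+2) * qt N (m+3)) := by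
    rcases le_total α β with h | h
    · rw [min_eq_left h, max_eq_right h, ← habs, abs_of_nonneg (sub_nonneg.2 h)]
    · rw [min_eq_right h, max_eq_left h, ← habs, abs_of_nonpos (sub_nonpos.2 h)]; ring
  -- the key inequality
  have hE1 : (0:ℝ) < a * qt N (m+1) + qt N (m+2) := by
    linarith only [mul_nonneg ha0 hqA.le, hqB]
  have hE2 : (0:ℝ) < a * qt N (m+2) + qt N (m+3) := by
    linarith only [mul_nonneg ha0 hqB.le, hqC]
  have hprod : (a * max α β + N) * (a * min α β + N) = (a * α + N) * (a * β + N) := by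
    rcases le_total α β with h | h
    · rw [min_eq_left h, max_eq_right h]; ring
    · rw [min_eq_right h, max_eq_left h]
  have hXval : (a * α + N) * (a * β + N)
      = (N:ℝ)^2 * ((a * qt N (m+1) + qt N (m+2)) * (a * qt N (m+2) + qt N (m+3)))
        / (qt N (m+2) * qt N (m+3)) := by
    rw [hα_def, hβ_def]
    field_simp [hqB.ne', hqC.ne']
  have hmain : (1+(N:ℝ)) * N * ((a * qt N (m+1) + qt N (m+2)) * (a * qt N (m+2) + qt N (m+3)))
      ≤ ((N:ℝ) + a) * (qt N (m+3) * qt N (m+4)) :=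
    main_ineq (N:ℝ) a (qt N (m+1)) (qt N (m+2)) (qt N (m+3)) (qt N (m+4))
      h1 ha0 ha1 hqA.le hqB hrC hrD
  have hkey : (1+(N:ℝ)) * (N:ℝ)^(m+2) / (qt N (m+3) * qt N (m+4))
      ≤ (GNa N a (Ioo (min α β) (max α β))).toReal := by
    rw [hJval, hdiffval, hprod, hXval]
    have hRHS : (N:ℝ) * (N + a) * ((N:ℝ)^(m+2) / (qt N (m+2) * qt N (m+3)))
        / ((N:ℝ)^2 * ((a * qt N (m+1) + qt N (m+2)) * (a * qt N (m+2) + qt N (m+3)))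
            / (qt N (m+2) * qt N (m+3)))
        = ((N:ℝ) + a) * (N:ℝ)^(m+2)
            / ((N:ℝ) * ((a * qt N (m+1) + qt N (m+2)) * (a * qt N (m+2) + qt N (m+3)))) := by
      field_simp [hqB.ne', hqC.ne', hN0.ne', hE1.ne', hE2.ne']
    rw [hRHS, div_le_div_iff₀ (mul_pos hqC hqD) (by positivity)]
    nlinarith only [mul_le_mul_of_nonneg_left hmain (pow_nonneg hN0.le (m+2))]
  -- the supremum
  have hLpos : 0 < Real.log (((N:ℝ)+1)/N) := by
    apply Real.log_pos
    rw [lt_div_iff₀ hN0]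
    linarith only []
  have hcbound : ∀ p : Icc (0:ℝ) 1 × Icc (0:ℝ) 1,
      0 ≤ (Real.log (((N:ℝ)+1)/N))⁻¹ * Real.log (((p.1 : ℝ) * (p.2 : ℝ) + N) / N) ∧
      (Real.log (((N:ℝ)+1)/N))⁻¹ * Real.log (((p.1 : ℝ) * (p.2 : ℝ) + N) / N) ≤ 1 := by
    intro p
    have hx0 : (0:ℝ) ≤ (p.1 : ℝ) := p.1.2.1
    have hx1 : (p.1 : ℝ) ≤ 1 := p.1.2.2
    have hy0 : (0:ℝ) ≤ (p.2 : ℝ) := p.2.2.1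
    have hy1 : (p.2 : ℝ) ≤ 1 := p.2.2.2
    have hxy0 : (0:ℝ) ≤ (p.1 : ℝ) * (p.2 : ℝ) := mul_nonneg hx0 hy0
    have hxy1 : (p.1 : ℝ) * (p.2 : ℝ) ≤ 1 := by nlinarith only [hx0, hx1, hy0, hy1]
    have hlog0 : 0 ≤ Real.log (((p.1 : ℝ) * (p.2 : ℝ) + N) / N) := by
      apply Real.log_nonneg
      rw [le_div_iff₀ hN0]
      linarith only [hxy0]
    have hlogle : Real.log (((p.1 : ℝ) * (p.2 : ℝ) + N) / N) ≤ Real.log (((N:ℝ)+1)/N) := by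
      apply Real.log_le_log (by positivity)
      exact (div_le_div_iff_of_pos_right hN0).2 (by linarith only [hxy1])
    constructor
    · exact mul_nonneg (inv_nonneg.2 hLpos.le) hlog0
    · calc (Real.log (((N:ℝ)+1)/N))⁻¹ * Real.log (((p.1 : ℝ) * (p.2 : ℝ) + N) / N)
          ≤ (Real.log (((N:ℝ)+1)/N))⁻¹ * Real.log (((N:ℝ)+1)/N) :=
            mul_le_mul_of_nonneg_left hlogle (inv_nonneg.2 hLpos.le)
        _ = 1 := inv_mul_cancel₀ hLpos.ne'
  have hBdd : BddAbove (Set.range (Ffun N a (m+1))) := by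
    refine ⟨(GNa N a Set.univ).toReal + 1, ?_⟩
    rintro _ ⟨p, rfl⟩
    have hμle : (GNa N a {x' ∈ Icc (0:ℝ) 1 |
          (TN N)^[m+1] x' ∈ Icc (0:ℝ) p.1 ∧ sSeq N a x' (m+1) ∈ Icc (0:ℝ) p.2}).toReal
        ≤ (GNa N a Set.univ).toReal :=
      ENNReal.toReal_mono (GNa_univ_ne_top hN ha) (measure_mono (subset_univ _))
    have hμ0 : 0 ≤ (GNa N a {x' ∈ Icc (0:ℝ) 1 |
          (TN N)^[m+1] x' ∈ Icc (0:ℝ) p.1 ∧ sSeq N a x' (m+1) ∈ Icc (0:ℝ) p.2}).toReal :=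
      ENNReal.toReal_nonneg
    obtain ⟨hc0, hc1⟩ := hcbound p
    rw [Ffun, abs_sub_le_iff]
    constructor <;> linarith only [hμle, hμ0, hc0, hc1, ENNReal.toReal_nonneg (a := GNa N a Set.univ)]
  -- conclude via an ε-argument
  refine le_of_forall_pos_le_add ?_
  intro η hη
  obtain ⟨ε, hε_def⟩ : ∃ e : ℝ, e = min y₀ (η * Real.log (((N:ℝ)+1)/N)) := ⟨_, rfl⟩
  have hε0 : 0 < ε := by rw [hε_def]; exact lt_min hy0pos (mul_pos hη hLpos)
  have hεy : ε ≤ y₀ := by rw [hε_def]; exact min_le_left _ _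
  have hεle : ε ≤ η * Real.log (((N:ℝ)+1)/N) := by rw [hε_def]; exact min_le_right _ _
  obtain ⟨y₁, hy₁_def⟩ : ∃ y : ℝ, y = y₀ - ε := ⟨_, rfl⟩
  have hy₁0 : 0 ≤ y₁ := by rw [hy₁_def]; linarith only [hεy]
  have hy₁1 : y₁ ≤ 1 := by rw [hy₁_def]; linarith only [hε0, hy01.2]
  have hy₁lt : y₁ < y₀ := by rw [hy₁_def]; linarith only [hε0]
  -- measure comparison
  have hsub1 : A y₁ ∪ Ioo (min α β) (max α β) ⊆ A y₀ := by
    rintro x (hx | hx)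
    · obtain ⟨hx1, hx2, hx3⟩ := (hmemA y₁ x).1 hx
      exact (hmemA y₀ x).2 ⟨hx1, hx2, hx3.1, hx3.2.trans hy₁lt.le⟩
    · obtain ⟨hg1, hg2, hg3⟩ := hsval x (hJsub hx)
      refine (hmemA y₀ x).2 ⟨hg1, hg2, ?_⟩
      rw [hg3]
      exact ⟨hy0pos.le, le_rfl⟩
  have hdisj : Disjoint (A y₁) (Ioo (min α β) (max α β)) := by
    rw [Set.disjoint_left]
    intro x hx hxJ
    obtain ⟨hx1, hx2, hx3⟩ := (hmemA y₁ x).1 hx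
    obtain ⟨hg1, hg2, hg3⟩ := hsval x (hJsub hxJ)
    rw [hg3] at hx3
    exact absurd hx3.2 (not_le.2 hy₁lt)
  have hmeasle : GNa N a (A y₁) + GNa N a (Ioo (min α β) (max α β)) ≤ GNa N a (A y₀) := by
    rw [← measure_union hdisj measurableSet_Ioo]
    exact measure_mono hsub1
  have hreal : (GNa N a (A y₁)).toReal + (GNa N a (Ioo (min α β) (max α β))).toReal
      ≤ (GNa N a (A y₀)).toReal := by
    have h := ENNReal.toReal_mono (GNa_ne_top hN ha _) hmeasle
    rwa [ENNReal.toReal_add (GNa_ne_top hN ha _) (GNa_ne_top hN ha _)] at h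
  -- supremum bounds at the two chosen points
  have hp1mem : (1:ℝ) ∈ Icc (0:ℝ) 1 := by norm_num
  have hS1 : (GNa N a (A y₀)).toReal
      - (Real.log (((N:ℝ)+1)/N))⁻¹ * Real.log ((1 * y₀ + N) / N)
      ≤ ⨆ p : Icc (0:ℝ) 1 × Icc (0:ℝ) 1, Ffun N a (m+1) p := by
    have h := le_ciSup hBdd (⟨⟨1, hp1mem⟩, ⟨y₀, hy01⟩⟩ : Icc (0:ℝ) 1 × Icc (0:ℝ) 1)
    rw [hA_def]
    exact le_trans (le_abs_self _) h
  have hS2 : (Real.log (((N:ℝ)+1)/N))⁻¹ * Real.log ((1 * y₁ + N) / N)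
      - (GNa N a (A y₁)).toReal
      ≤ ⨆ p : Icc (0:ℝ) 1 × Icc (0:ℝ) 1, Ffun N a (m+1) p := by
    have h := le_ciSup hBdd (⟨⟨1, hp1mem⟩, ⟨y₁, hy₁0, hy₁1⟩⟩ : Icc (0:ℝ) 1 × Icc (0:ℝ) 1)
    rw [hA_def]
    exact le_trans (le_abs_self _) (le_trans (le_of_eq (abs_sub_comm _ _)) h)
  -- the continuity estimate for the limit distribution
  have hcdiff : (Real.log (((N:ℝ)+1)/N))⁻¹ * Real.log ((1 * y₀ + N) / N)
      - (Real.log (((N:ℝ)+1)/N))⁻¹ * Real.log ((1 * y₁ + N) / N) ≤ η := by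
    have t1 : (0:ℝ) < 1 * y₁ + N := by linarith only [hy₁0, h1]
    have t2 : (0:ℝ) < 1 * y₀ + N := by linarith only [hy0pos, h1]
    have hlog : Real.log ((1 * y₀ + N) / N) - Real.log ((1 * y₁ + N) / N) ≤ ε := by
      rw [Real.log_div t2.ne' hN0.ne', Real.log_div t1.ne' hN0.ne']
      have hq : 0 < (1 * y₀ + N) / (1 * y₁ + N) := by positivity
      have h := Real.log_le_sub_one_of_pos hq
      rw [Real.log_div t2.ne' t1.ne'] at h
      have hε' : (1 * y₀ + N) / (1 * y₁ + N) - 1 ≤ ε := by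
        rw [div_sub_one t1.ne', div_le_iff₀ t1]
        have he : 1 * y₀ + N - (1 * y₁ + N) = ε := by rw [hy₁_def]; ring
        rw [he]
        have ho : (1:ℝ) ≤ 1 * y₁ + N := by linarith only [hy₁0, h1]
        nlinarith only [ho, hε0.le]
      linarith only [h, hε']
    have hfact : (Real.log (((N:ℝ)+1)/N))⁻¹ * Real.log ((1 * y₀ + N) / N)
        - (Real.log (((N:ℝ)+1)/N))⁻¹ * Real.log ((1 * y₁ + N) / N)
        = (Real.log (((N:ℝ)+1)/N))⁻¹
            * (Real.log ((1 * y₀ + N) / N) - Real.log ((1 * y₁ + N) / N)) := by ring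
    rw [hfact]
    calc (Real.log (((N:ℝ)+1)/N))⁻¹
            * (Real.log ((1 * y₀ + N) / N) - Real.log ((1 * y₁ + N) / N))
        ≤ (Real.log (((N:ℝ)+1)/N))⁻¹ * (η * Real.log (((N:ℝ)+1)/N)) :=
          mul_le_mul_of_nonneg_left (hlog.trans hεle) (inv_nonneg.2 hLpos.le)
      _ = η := by field_simp
  -- put everything together
  have hJ0 : 0 ≤ (GNa N a (Ioo (min α β) (max α β))).toReal := ENNReal.toReal_nonneg
  linarith only [hkey, hreal, hS1, hS2, hcdiff, hη.le, hJ0]
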